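/- Let n ≥ 3, and let r, t, c be real numbers. Let M be the symmetric n×n real matrix with M₁₁ = 2eᵗ, Mᵢᵢ = 2eᵗ for 2 ≤ i ≤ n−1, M₁ₙ = Mₙ₁ = 2reᵗ, Mₙₙ = r²eᵗ + c, and all other entries zero. Then at most one eigenvalue of M (counted with multiplicity) is negative; equivalently, M has at least n−1 nonnegative eigenvalues counted with multiplicity. -/

import Mathlib

/-- The `k`-th elementary symmetric function of a square real matrix:
the sum of its `k × k` principal minors. -/
noncomputable def sigmaK {ι : Type*} [Fintype ι] [DecidableEq ι] (k : ℕ)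
    (A : Matrix ι ι ℝ) : ℝ :=
  ∑ s ∈ (Finset.univ : Finset ι).powersetCard k,
    Matrix.det (fun i j : {x : ι // x ∈ s} => A i.1 j.1)

/-- The Hessian matrix of `u` at `x`, with entries `∂ᵢ∂ⱼ u (x)`. -/
noncomputable def hessian {ι : Type*} [Fintype ι] [DecidableEq ι]
    (u : (ι → ℝ) → ℝ) (x : ι → ℝ) : Matrix ι ι ℝ :=
  fun i j => fderiv ℝ (fun y => fderiv ℝ u y (Pi.single j 1)) x (Pi.single i 1)

/-- The matrix arising as the Hessian of `u(x,t) = r² eᵗ + h(t)` has at most one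
negative eigenvalue (counted with multiplicity). -/
theorem at_most_one_negative_eigenvalue (n : ℕ) (hn : 3 ≤ n) (r t c : ℝ)
    (M : Matrix (Fin n) (Fin n) ℝ)
    (hM : M = Matrix.of fun i j : Fin n =>
      if i = j then (if (i : ℕ) = n - 1 then r ^ 2 * Real.exp t + c else 2 * Real.exp t)
      else if ((i : ℕ) = 0 ∧ (j : ℕ) = n - 1) ∨ ((i : ℕ) = n - 1 ∧ (j : ℕ) = 0)
        then 2 * r * Real.exp t else 0)
    (hHerm : M.IsHermitian) :
    (Finset.univ.filter fun i => hHerm.eigenvalues i < 0).card ≤ 1 := by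
  by_contra hcard
  push_neg at hcard
  obtain ⟨i, hi, j, hj, hij⟩ := Finset.one_lt_card.mp hcard
  simp only [Finset.mem_filter, Finset.mem_univ, true_and] at hi hj
  set nIdx : Fin n := ⟨n - 1, by omega⟩ with hnIdx
  -- quadratic form is nonneg on the hyperplane x nIdx = 0
  have hQ : ∀ x : Fin n → ℝ, x nIdx = 0 → 0 ≤ ∑ k, x k * Matrix.mulVec M x k := by
    intro x hx
    have hrw : ∀ k : Fin n, x k * Matrix.mulVec M x k = ∑ l, x k * (M k l * x l) := by
      intro k
      simp [Matrix.mulVec, dotProduct, Finset.mul_sum]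
    rw [Finset.sum_congr rfl fun k _ => hrw k]
    apply Finset.sum_nonneg
    intro k _
    apply Finset.sum_nonneg
    intro l _
    have hept := Real.exp_pos t
    subst hM
    simp only [Matrix.of_apply]
    split_ifs with h1 h2 h3
    · -- diagonal, index n-1
      have hk : k = nIdx := Fin.ext h2
      rw [hk, hx]
      simp
    · -- diagonal, other index
      subst h1
      nlinarith [sq_nonneg (x k)]
    · -- off-diagonal corner entries: one index is nIdx
      rcases h3 with ⟨hk0, hl⟩ | ⟨hk, hl0⟩
      · have : l = nIdx := Fin.ext hl
        rw [this, hx]; ring_nf; exact le_refl 0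
      · have : k = nIdx := Fin.ext hk
        rw [this, hx]; ring_nf; exact le_refl 0
    · simp
  -- eigenvectors
  set u : EuclideanSpace ℝ (Fin n) := hHerm.eigenvectorBasis i with hu
  set w : EuclideanSpace ℝ (Fin n) := hHerm.eigenvectorBasis j with hw
  set li := hHerm.eigenvalues i with hli
  set lj := hHerm.eigenvalues j with hlj
  have hui : Matrix.mulVec M (u : Fin n → ℝ) = li • (u : Fin n → ℝ) := hHerm.mulVec_eigenvectorBasis i
  have huj : Matrix.mulVec M (w : Fin n → ℝ) = lj • (w : Fin n → ℝ) := hHerm.mulVec_eigenvectorBasis j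
  have hON := hHerm.eigenvectorBasis.orthonormal
  have hnormu : ∑ k, u k * u k = 1 := by
    have h1 : ‖u‖ = 1 := hON.1 i
    have := real_inner_self_eq_norm_sq u
    rw [h1] at this
    simp only [PiLp.inner_apply, RCLike.inner_apply, conj_trivial] at this
    simpa [mul_comm] using this
  have hnormw : ∑ k, w k * w k = 1 := by
    have h1 : ‖w‖ = 1 := hON.1 j
    have := real_inner_self_eq_norm_sq w
    rw [h1] at this
    simp only [PiLp.inner_apply, RCLike.inner_apply, conj_trivial] at this
    simpa [mul_comm] using this
  have horth : ∑ k, u k * w k = 0 := by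
    have := hON.2 hij
    simpa [PiLp.inner_apply, RCLike.inner_apply, conj_trivial, hu, hw, mul_comm] using this
  -- the contradiction machine
  have key : ∀ a b : ℝ, a * u nIdx + b * w nIdx = 0 → 0 < a ^ 2 + b ^ 2 → False := by
    intro a b hv0 hab
    set v : Fin n → ℝ := fun k => a * u k + b * w k with hv
    have hMv : Matrix.mulVec M v = fun k => (a * li) * u k + (b * lj) * w k := by
      have : v = a • (u : Fin n → ℝ) + b • (w : Fin n → ℝ) := by
        funext k; simp [hv]
      rw [this, Matrix.mulVec_add, Matrix.mulVec_smul, Matrix.mulVec_smul, hui, huj]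
      funext k
      simp [smul_smul]
    have hQv : ∑ k, v k * Matrix.mulVec M v k = a ^ 2 * li + b ^ 2 * lj := by
      rw [hMv]
      have hterm : ∀ k : Fin n, v k * ((a * li) * u k + (b * lj) * w k) =
          (a ^ 2 * li) * (u k * u k) + (b ^ 2 * lj) * (w k * w k)
            + (a * b * li + a * b * lj) * (u k * w k) := by
        intro k; simp only [hv]; ring
      rw [Finset.sum_congr rfl fun k _ => hterm k]
      rw [Finset.sum_add_distrib, Finset.sum_add_distrib, ← Finset.mul_sum, ← Finset.mul_sum,
        ← Finset.mul_sum, hnormu, hnormw, horth]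
      ring
    have hge := hQ v hv0
    rw [hQv] at hge
    nlinarith [mul_pos (mul_pos_of_neg_of_neg hi hj) hab, sq_nonneg (a * li), sq_nonneg (b * lj)]
  by_cases hu0 : u nIdx = 0
  · exact key 1 0 (by simp [hu0]) (by norm_num)
  · refine key (w nIdx) (-(u nIdx)) (by ring) ?_
    have : 0 < u nIdx ^ 2 := by positivity
    nlinarith [sq_nonneg (w nIdx)]
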